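/- Let W = W(B_n) be the group of signed permutations, i.e., permutations w of {±1,…,±n} with w(-a) = -w(a) for all a. An element w = [a_1,…,a_n] (where a_i = w(i)) has no reduced expression (in the standard Coxeter generators s_0, s_1, …, s_{n-1} of type B_n, with m_{01}=4) containing the substring s_0 s_1 s_0 s_1 or s_1 s_0 s_1 s_0 if and only if there is no pair of indices i < j with a_i > a_j and both a_i < 0 and a_j < 0. -/

import Mathlib

/-- The Coxeter generators of the type `B_n` signed permutation group, viewed inside
`Equiv.Perm ℤ`: `s_0` negates `1` (i.e., swaps `1` and `-1`), and for `1 ≤ i ≤ n - 1`,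
`s_i` swaps `i, i+1` and simultaneously `-i, -(i+1)`. -/
def genB (n : ℕ) (i : Fin n) : Equiv.Perm ℤ :=
  if i.val = 0 then Equiv.swap 1 (-1)
  else Equiv.swap ((i : ℕ) : ℤ) (((i : ℕ) : ℤ) + 1) *
    Equiv.swap (-((i : ℕ) : ℤ)) (-(((i : ℕ) : ℤ) + 1))

namespace SPB

open Equiv Finset

/-- the double-swap permutation for `j ≥ 1` -/
def gp (j : ℤ) : Equiv.Perm ℤ :=
  Equiv.swap j (j + 1) * Equiv.swap (-j) (-(j + 1))

variable {j : ℤ}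

lemma gp_apply (hj : 1 ≤ j) (x : ℤ) :
    gp j x = if x = j then j + 1 else if x = j + 1 then j
      else if x = -j then -(j+1) else if x = -(j+1) then -j else x := by
  have h1 : j ≠ -j := by omega
  have h2 : j ≠ -(j+1) := by omega
  have h3 : j + 1 ≠ -j := by omega
  have h4 : j + 1 ≠ -(j+1) := by omega
  simp only [gp, Equiv.Perm.mul_apply, Equiv.swap_apply_def]
  split_ifs <;> omega

lemma gp_invol (hj : 1 ≤ j) : gp j * gp j = 1 := by
  ext x
  simp only [Equiv.Perm.mul_apply, Equiv.Perm.one_apply, gp_apply hj]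
  split_ifs <;> omega

lemma gp_neg (hj : 1 ≤ j) (x : ℤ) : gp j (-x) = -(gp j x) := by
  simp only [gp_apply hj]; split_ifs <;> omega

lemma gp_fix (hj : 1 ≤ j) {x : ℤ} (h : |x| ≠ j ∧ |x| ≠ j + 1) : gp j x = x := by
  rcases abs_cases x with ⟨h1, h2⟩ | ⟨h1, h2⟩ <;>
    · simp only [gp_apply hj]; split_ifs <;> omega

end SPB

namespace SPB2
open Equiv Finset SPB

/-- s0 -/
def s0 : Equiv.Perm ℤ := Equiv.swap 1 (-1)

lemma s0_apply (x : ℤ) : s0 x = if x = 1 then -1 else if x = -1 then 1 else x := by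
  simp only [s0, Equiv.swap_apply_def]

lemma s0_invol : s0 * s0 = 1 := by
  ext x
  simp only [Equiv.Perm.mul_apply, Equiv.Perm.one_apply, s0_apply]
  split_ifs <;> simp_all

lemma s0_neg (x : ℤ) : s0 (-x) = -(s0 x) := by
  simp only [s0_apply]; split_ifs <;> omega

variable {n : ℕ}

lemma genB_eq_s0 {i : Fin n} (h : i.val = 0) : genB n i = s0 := by
  simp [genB, h, s0]

lemma genB_eq_gp {i : Fin n} (h : i.val ≠ 0) : genB n i = gp (i.val : ℤ) := by
  simp [genB, h, gp]

lemma genB_invol (i : Fin n) : genB n i * genB n i = 1 := by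
  rcases eq_or_ne i.val 0 with h | h
  · rw [genB_eq_s0 h]; exact s0_invol
  · rw [genB_eq_gp h]; exact gp_invol (by exact_mod_cast Nat.one_le_iff_ne_zero.mpr h)

/-- signed permutation predicate -/
def SP (n : ℕ) (w : Equiv.Perm ℤ) : Prop :=
  (∀ a : ℤ, w (-a) = -(w a)) ∧ ∀ a : ℤ, (n : ℤ) < |a| → w a = a

lemma SP.one : SP n 1 := ⟨fun a => rfl, fun a _ => rfl⟩

lemma SP.mul {v w : Equiv.Perm ℤ} (hv : SP n v) (hw : SP n w) : SP n (v * w) :=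
  ⟨fun a => by rw [Equiv.Perm.mul_apply, hw.1, hv.1, Equiv.Perm.mul_apply],
   fun a ha => by rw [Equiv.Perm.mul_apply, hw.2 a ha, hv.2 a ha]⟩

lemma SP.genB (hn : 1 ≤ n) (i : Fin n) : SP n (genB n i) := by
  rcases eq_or_ne i.val 0 with h | h
  · rw [genB_eq_s0 h]
    refine ⟨s0_neg, fun a ha => ?_⟩
    rw [s0_apply]
    have h1 : 1 ≤ (n : ℤ) := by exact_mod_cast hn
    rcases abs_cases a with ⟨h2, h3⟩ | ⟨h2, h3⟩ <;> · split_ifs <;> omega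
  · rw [genB_eq_gp h]
    have hj : 1 ≤ (i.val : ℤ) := by exact_mod_cast Nat.one_le_iff_ne_zero.mpr h
    refine ⟨gp_neg hj, fun a ha => ?_⟩
    have hi : (i.val : ℤ) + 1 ≤ n := by
      have := i.isLt; omega
    exact gp_fix hj ⟨by omega, by omega⟩

lemma SP.zero {w : Equiv.Perm ℤ} (hw : SP n w) : w 0 = 0 := by
  have h := hw.1 0
  rw [neg_zero] at h
  omega

lemma SP.abs_le {w : Equiv.Perm ℤ} (hw : SP n w) {a : ℤ} (ha : |a| ≤ n) : |w a| ≤ n := by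
  by_contra h
  push_neg at h
  have h2 := hw.2 _ h
  have h3 := w.injective h2
  rw [h3] at h
  omega

lemma SP.inv {w : Equiv.Perm ℤ} (hw : SP n w) : SP n w⁻¹ := by
  constructor
  · intro a
    apply w.injective
    rw [(show ∀ x, w (w⁻¹ x) = x from fun x => w.apply_symm_apply x), hw.1, (show ∀ x, w (w⁻¹ x) = x from fun x => w.apply_symm_apply x)]
  · intro a ha
    apply w.injective
    rw [(show ∀ x, w (w⁻¹ x) = x from fun x => w.apply_symm_apply x), hw.2 a ha]

end SPB2

namespace SPB2
open Equiv Finset SPB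

lemma card_erase_ite {α : Type*} [DecidableEq α] (s : Finset α) (E : α) :
    s.card = (s.erase E).card + (if E ∈ s then 1 else 0) := by
  by_cases h : E ∈ s
  · rw [if_pos h, Finset.card_erase_of_mem h]
    have h1 : 1 ≤ s.card := Finset.card_pos.mpr ⟨E, h⟩
    omega
  · rw [if_neg h, Finset.erase_eq_of_notMem h, Nat.add_zero]

/-- the domain -/
noncomputable def D (n : ℕ) : Finset ℤ := Finset.Icc (-(n : ℤ)) n

lemma mem_D {n : ℕ} {x : ℤ} : x ∈ D n ↔ |x| ≤ n := by
  rw [D, Finset.mem_Icc, abs_le]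

/-- the length statistic -/
noncomputable def lenSet (n : ℕ) (w : Equiv.Perm ℤ) : Finset (ℤ × ℤ) :=
  (D n ×ˢ D n).filter (fun p => |p.1| < p.2 ∧ w p.2 < w p.1)

noncomputable def len (n : ℕ) (w : Equiv.Perm ℤ) : ℕ := (lenSet n w).card

lemma mem_lenSet {n : ℕ} {w : Equiv.Perm ℤ} {p : ℤ × ℤ} :
    p ∈ lenSet n w ↔ (|p.1| ≤ n ∧ |p.2| ≤ n) ∧ |p.1| < p.2 ∧ w p.2 < w p.1 := by
  rw [lenSet, Finset.mem_filter, Finset.mem_product, mem_D, mem_D]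

lemma len_one (n : ℕ) : len n 1 = 0 := by
  rw [len, Finset.card_eq_zero, lenSet, Finset.filter_eq_empty_iff]
  intro p _
  simp only [Equiv.Perm.one_apply]
  rintro ⟨h1, h2⟩
  have := le_abs_self p.1
  omega

lemma s0_abs (x : ℤ) : |s0 x| = |x| := by
  simp only [s0_apply]
  split_ifs <;> simp_all

lemma s0_s0 (x : ℤ) : s0 (s0 x) = x := by
  have := congrArg (fun u => u x) s0_invol
  simpa using this

/-- key bijection for s0 -/
lemma len_s0_erase {n : ℕ} (w : Equiv.Perm ℤ) :
    ((lenSet n (w * s0)).erase (0, 1)).card = ((lenSet n w).erase (0, 1)).card := by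
  apply Finset.card_bij' (fun p _ => (s0 p.1, s0 p.2)) (fun p _ => (s0 p.1, s0 p.2))
  · -- forward membership
    rintro ⟨a, b⟩ hp
    rw [Finset.mem_erase, mem_lenSet] at hp
    obtain ⟨hne, ⟨ha, hb⟩, hab, hcond⟩ := hp
    dsimp only at ha hb hab hcond
    have hb2 : 2 ≤ b := by
      by_contra h
      push_neg at h
      have hb1 : b = 1 := by have := abs_nonneg a; omega
      have ha0 : a = 0 := by
        rw [hb1] at hab
        have := le_abs_self a
        have := neg_abs_le a
        omega
      exact hne (by rw [Prod.ext_iff]; exact ⟨ha0, hb1⟩)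
    have hsb : s0 b = b := by rw [s0_apply]; split_ifs <;> omega
    rw [Finset.mem_erase, mem_lenSet]
    refine ⟨?_, ⟨by rw [s0_abs]; exact ha, by rw [s0_abs]; exact hb⟩, ?_, ?_⟩
    · intro hE
      rw [Prod.ext_iff] at hE
      dsimp only at hE
      rw [hsb] at hE
      omega
    · simp only [hsb, s0_abs]; exact hab
    · simp only [Equiv.Perm.mul_apply] at hcond
      simpa [hsb] using hcond
  · -- backward membership
    rintro ⟨a, b⟩ hp
    rw [Finset.mem_erase, mem_lenSet] at hp
    obtain ⟨hne, ⟨ha, hb⟩, hab, hcond⟩ := hp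
    dsimp only at ha hb hab hcond
    have hb2 : 2 ≤ b := by
      by_contra h
      push_neg at h
      have hb1 : b = 1 := by have := abs_nonneg a; omega
      have ha0 : a = 0 := by
        rw [hb1] at hab
        have := le_abs_self a
        have := neg_abs_le a
        omega
      exact hne (by rw [Prod.ext_iff]; exact ⟨ha0, hb1⟩)
    have hsb : s0 b = b := by rw [s0_apply]; split_ifs <;> omega
    rw [Finset.mem_erase, mem_lenSet]
    refine ⟨?_, ⟨by rw [s0_abs]; exact ha, by rw [s0_abs]; exact hb⟩, ?_, ?_⟩
    · intro hE
      rw [Prod.ext_iff] at hE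
      dsimp only at hE
      rw [hsb] at hE
      omega
    · simp only [hsb, s0_abs]; exact hab
    · simp only [Equiv.Perm.mul_apply, s0_s0]
      simpa [hsb] using hcond
  · rintro ⟨a, b⟩ _; simp [s0_s0]
  · rintro ⟨a, b⟩ _; simp [s0_s0]

lemma len_mul_s0 {n : ℕ} (hn : 1 ≤ n) {w : Equiv.Perm ℤ} (hw : SP n w) :
    (0 < w 1 → len n (w * s0) = len n w + 1) ∧
    (w 1 < 0 → len n (w * s0) + 1 = len n w) := by
  have key := len_s0_erase (n := n) w
  have hA := card_erase_ite (lenSet n (w * s0)) ((0 : ℤ), (1 : ℤ))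
  have hB := card_erase_ite (lenSet n w) ((0 : ℤ), (1 : ℤ))
  have h0 : w 0 = 0 := hw.zero
  have hmemA : ((0 : ℤ), (1 : ℤ)) ∈ lenSet n (w * s0) ↔ 0 < w 1 := by
    rw [mem_lenSet]
    have : (w * s0) (((0:ℤ),(1:ℤ)).2) = -(w 1) := by
      simp only [Equiv.Perm.mul_apply]
      rw [show s0 (1:ℤ) = -1 by rw [s0_apply]; norm_num, hw.1, ]
    constructor
    · rintro ⟨_, _, hc⟩
      rw [this] at hc
      have : (w * s0) ((0:ℤ),(1:ℤ)).1 = 0 := by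
        simp only [Equiv.Perm.mul_apply]
        rw [show s0 (0:ℤ) = 0 by rw [s0_apply]; norm_num, h0]
      omega
    · intro hpos
      have h1 : (1:ℤ) ≤ n := by exact_mod_cast hn
      refine ⟨⟨by norm_num, by rw [abs_one]; omega⟩, by norm_num, ?_⟩
      show (w * s0) 1 < (w * s0) 0
      simp only [Equiv.Perm.mul_apply]
      rw [show s0 (1:ℤ) = -1 by rw [s0_apply]; norm_num,
        show s0 (0:ℤ) = 0 by rw [s0_apply]; norm_num, hw.1, h0]
      omega
  have hmemB : ((0 : ℤ), (1 : ℤ)) ∈ lenSet n w ↔ w 1 < 0 := by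
    rw [mem_lenSet]
    constructor
    · rintro ⟨_, _, hc⟩
      simp only at hc
      rw [h0] at hc
      exact hc
    · intro hneg
      have h1 : (1:ℤ) ≤ n := by exact_mod_cast hn
      exact ⟨⟨by norm_num, by rw [abs_one]; omega⟩, by norm_num,
        by simp only; rw [h0]; exact hneg⟩
  constructor
  · intro hpos
    rw [len, len, hA, hB, key, if_pos (hmemA.mpr hpos), if_neg]
    rw [hmemB]
    omega
  · intro hneg
    rw [len, len, hA, hB, key, if_pos (hmemB.mpr hneg), if_neg]
    rw [hmemA]
    omega

end SPB2

namespace SPB2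
open Equiv Finset SPB

variable {n : ℕ} {j : ℤ}

lemma gp_gp (hj : 1 ≤ j) (x : ℤ) : gp j (gp j x) = x := by
  have := congrArg (fun u => u x) (gp_invol hj)
  simpa using this

lemma abs_facts (j : ℤ) (hj : 1 ≤ j) :
    |j| = j ∧ |j + 1| = j + 1 ∧ |(-j)| = j ∧ |(-(j+1))| = j + 1 := by
  refine ⟨abs_of_nonneg (by omega), abs_of_nonneg (by omega), ?_, ?_⟩
  · rw [abs_neg]; exact abs_of_nonneg (by omega)
  · rw [abs_neg]; exact abs_of_nonneg (by omega)

lemma gp_abs_le (hj : 1 ≤ j) (hjn : j + 1 ≤ (n : ℤ)) {x : ℤ} (hx : |x| ≤ n) :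
    |gp j x| ≤ n := by
  obtain ⟨e1, e2, e3, e4⟩ := abs_facts j hj
  rcases abs_cases x with ⟨f1, f2⟩ | ⟨f1, f2⟩ <;>
    · simp only [gp_apply hj]; split_ifs <;> omega

lemma gp_pair (hj : 1 ≤ j) {a b : ℤ} (hab : |a| < b)
    (h1 : ¬(a = j ∧ b = j + 1)) (h2 : ¬(a = -j ∧ b = j + 1)) :
    |gp j a| < gp j b := by
  obtain ⟨e1, e2, e3, e4⟩ := abs_facts j hj
  rcases abs_cases a with ⟨f1, f2⟩ | ⟨f1, f2⟩ <;>
    · simp only [gp_apply hj]; split_ifs <;> omega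

/-- key bijection for gp -/
lemma len_gp_erase (hj : 1 ≤ j) (hjn : j + 1 ≤ (n : ℤ)) (w : Equiv.Perm ℤ) :
    (((lenSet n (w * gp j)).erase (j, j+1)).erase (-j, j+1)).card =
    (((lenSet n w).erase (j, j+1)).erase (-j, j+1)).card := by
  obtain ⟨e1, e2, e3, e4⟩ := abs_facts j hj
  have habs : ∀ x : ℤ, gp j x = x ∨ |gp j x| = j ∨ |gp j x| = j + 1 := by
    intro x
    simp only [gp_apply hj]
    split_ifs <;> omega
  apply Finset.card_bij' (fun p _ => (gp j p.1, gp j p.2)) (fun p _ => (gp j p.1, gp j p.2))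
  · rintro ⟨a, b⟩ hp
    rw [Finset.mem_erase, Finset.mem_erase, mem_lenSet] at hp
    obtain ⟨hne2, hne1, ⟨ha, hb⟩, hab, hcond⟩ := hp
    dsimp only at ha hb hab hcond
    simp only [ne_eq, Prod.mk.injEq] at hne1 hne2
    rw [Finset.mem_erase, Finset.mem_erase, mem_lenSet]
    have hv : |gp j a| < gp j b := gp_pair hj hab (by tauto) (by tauto)
    refine ⟨?_, ?_, ⟨gp_abs_le hj hjn ha, gp_abs_le hj hjn hb⟩, hv, ?_⟩
    · intro hE
      rw [Prod.ext_iff] at hE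
      dsimp only at hE
      obtain ⟨g1, g2⟩ := hE
      have ha' := congrArg (gp j) g1
      have hb' := congrArg (gp j) g2
      rw [gp_gp hj] at ha' hb'
      rw [gp_apply hj] at ha' hb'
      rw [if_neg (by omega : ¬-j = j), if_neg (by omega : ¬-j = j+1),
        if_pos rfl] at ha'
      rw [if_neg (by omega : ¬j+1 = j), if_pos rfl] at hb'
      rw [ha', hb'] at hab
      omega
    · intro hE
      rw [Prod.ext_iff] at hE
      dsimp only at hE
      obtain ⟨g1, g2⟩ := hE
      have ha' := congrArg (gp j) g1
      have hb' := congrArg (gp j) g2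
      rw [gp_gp hj] at ha' hb'
      rw [gp_apply hj] at ha' hb'
      rw [if_pos rfl] at ha'
      rw [if_neg (by omega : ¬j+1 = j), if_pos rfl] at hb'
      rw [ha', hb'] at hab
      omega
    · dsimp only
      simp only [Equiv.Perm.mul_apply] at hcond ⊢
      first
        | exact hcond
        | (rw [gp_gp hj, gp_gp hj]; exact hcond)
  · rintro ⟨a, b⟩ hp
    rw [Finset.mem_erase, Finset.mem_erase, mem_lenSet] at hp
    obtain ⟨hne2, hne1, ⟨ha, hb⟩, hab, hcond⟩ := hp
    dsimp only at ha hb hab hcond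
    simp only [ne_eq, Prod.mk.injEq] at hne1 hne2
    rw [Finset.mem_erase, Finset.mem_erase, mem_lenSet]
    have hv : |gp j a| < gp j b := gp_pair hj hab (by tauto) (by tauto)
    refine ⟨?_, ?_, ⟨gp_abs_le hj hjn ha, gp_abs_le hj hjn hb⟩, hv, ?_⟩
    · intro hE
      rw [Prod.ext_iff] at hE
      dsimp only at hE
      obtain ⟨g1, g2⟩ := hE
      have ha' := congrArg (gp j) g1
      have hb' := congrArg (gp j) g2
      rw [gp_gp hj] at ha' hb'
      rw [gp_apply hj] at ha' hb'
      rw [if_neg (by omega : ¬-j = j), if_neg (by omega : ¬-j = j+1),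
        if_pos rfl] at ha'
      rw [if_neg (by omega : ¬j+1 = j), if_pos rfl] at hb'
      rw [ha', hb'] at hab
      omega
    · intro hE
      rw [Prod.ext_iff] at hE
      dsimp only at hE
      obtain ⟨g1, g2⟩ := hE
      have ha' := congrArg (gp j) g1
      have hb' := congrArg (gp j) g2
      rw [gp_gp hj] at ha' hb'
      rw [gp_apply hj] at ha' hb'
      rw [if_pos rfl] at ha'
      rw [if_neg (by omega : ¬j+1 = j), if_pos rfl] at hb'
      rw [ha', hb'] at hab
      omega
    · dsimp only
      simp only [Equiv.Perm.mul_apply] at hcond ⊢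
      first
        | exact hcond
        | (rw [gp_gp hj, gp_gp hj]; exact hcond)
  · rintro ⟨a, b⟩ _; simp [gp_gp hj]
  · rintro ⟨a, b⟩ _; simp [gp_gp hj]

end SPB2

namespace SPB2
open Equiv Finset SPB

variable {n : ℕ} {j : ℤ} {w : Equiv.Perm ℤ}

lemma gpj_j (hj : 1 ≤ j) : gp j j = j + 1 := by
  rw [gp_apply hj, if_pos rfl]

lemma gpj_j1 (hj : 1 ≤ j) : gp j (j+1) = j := by
  rw [gp_apply hj, if_neg (by omega : ¬j+1 = j), if_pos rfl]

lemma gpj_nj (hj : 1 ≤ j) : gp j (-j) = -(j+1) := by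
  rw [gp_apply hj, if_neg (by omega : ¬-j = j), if_neg (by omega : ¬-j = j+1), if_pos rfl]

lemma len_mul_gp (hj : 1 ≤ j) (hjn : j + 1 ≤ (n : ℤ)) (hw : SP n w) :
    (w j < w (j+1) → len n (w * gp j) = len n w + 1) ∧
    (w (j+1) < w j → len n (w * gp j) + 1 = len n w) := by
  obtain ⟨e1, e2, e3, e4⟩ := abs_facts j hj
  have g1 : gp j j = j + 1 := gpj_j hj
  have g2 : gp j (j+1) = j := gpj_j1 hj
  have g3 : gp j (-j) = -(j+1) := gpj_nj hj
  have key := len_gp_erase (n := n) hj hjn w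
  have hmA1 : ((j, j+1) : ℤ×ℤ) ∈ lenSet n (w * gp j) ↔ w j < w (j+1) := by
    rw [mem_lenSet]
    dsimp only
    rw [Equiv.Perm.mul_apply, Equiv.Perm.mul_apply, g1, g2]
    exact ⟨fun h => h.2.2, fun h => ⟨⟨by omega, by omega⟩, by omega, h⟩⟩
  have hmB1 : ((j, j+1) : ℤ×ℤ) ∈ lenSet n w ↔ w (j+1) < w j := by
    rw [mem_lenSet]
    dsimp only
    exact ⟨fun h => h.2.2, fun h => ⟨⟨by omega, by omega⟩, by omega, h⟩⟩
  have hwn : w (-(j+1)) = -(w (j+1)) := hw.1 (j+1)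
  have hwn2 : w (-j) = -(w j) := hw.1 j
  have hmA2 : ((-j, j+1) : ℤ×ℤ) ∈ lenSet n (w * gp j) ↔ w j + w (j+1) < 0 := by
    rw [mem_lenSet]
    dsimp only
    rw [Equiv.Perm.mul_apply, Equiv.Perm.mul_apply, g2, g3, hwn]
    constructor
    · rintro ⟨_, _, h⟩; omega
    · intro h; exact ⟨⟨by omega, by omega⟩, by omega, by omega⟩
  have hmB2 : ((-j, j+1) : ℤ×ℤ) ∈ lenSet n w ↔ w j + w (j+1) < 0 := by
    rw [mem_lenSet]
    dsimp only
    rw [hwn2]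
    constructor
    · rintro ⟨_, _, h⟩; omega
    · intro h; exact ⟨⟨by omega, by omega⟩, by omega, by omega⟩
  have hne : ((-j, j+1) : ℤ×ℤ) ≠ (j, j+1) := by
    simp only [ne_eq, Prod.mk.injEq, not_and]
    intro h; omega
  have hstepA := card_erase_ite (lenSet n (w * gp j)) ((j, j+1) : ℤ×ℤ)
  have hstepA2 := card_erase_ite ((lenSet n (w * gp j)).erase ((j, j+1) : ℤ×ℤ)) ((-j, j+1) : ℤ×ℤ)
  have hstepB := card_erase_ite (lenSet n w) ((j, j+1) : ℤ×ℤ)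
  have hstepB2 := card_erase_ite ((lenSet n w).erase ((j, j+1) : ℤ×ℤ)) ((-j, j+1) : ℤ×ℤ)
  simp only [Finset.mem_erase] at hstepA2 hstepB2
  have hwx : w j ≠ w (j+1) := by
    intro h
    have := w.injective h
    omega
  constructor
  · intro h
    rw [if_pos (hmA1.mpr h)] at hstepA
    rw [if_neg (by rw [hmB1]; omega)] at hstepB
    by_cases hc : w j + w (j+1) < 0
    · rw [if_pos ⟨hne, hmA2.mpr hc⟩] at hstepA2
      rw [if_pos ⟨hne, hmB2.mpr hc⟩] at hstepB2
      simp only [len]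
      omega
    · rw [if_neg (by rw [and_iff_right hne, hmA2]; omega)] at hstepA2
      rw [if_neg (by rw [and_iff_right hne, hmB2]; omega)] at hstepB2
      simp only [len]
      omega
  · intro h
    rw [if_pos (hmB1.mpr h)] at hstepB
    rw [if_neg (by rw [hmA1]; omega)] at hstepA
    by_cases hc : w j + w (j+1) < 0
    · rw [if_pos ⟨hne, hmA2.mpr hc⟩] at hstepA2
      rw [if_pos ⟨hne, hmB2.mpr hc⟩] at hstepB2
      simp only [len]
      omega
    · rw [if_neg (by rw [and_iff_right hne, hmA2]; omega)] at hstepA2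
      rw [if_neg (by rw [and_iff_right hne, hmB2]; omega)] at hstepB2
      simp only [len]
      omega

end SPB2

namespace SPB2
open Equiv Finset SPB

variable {n : ℕ} {w : Equiv.Perm ℤ}

/-- ascent condition -/
def ascI (n : ℕ) (i : Fin n) (w : Equiv.Perm ℤ) : Prop :=
  if i.val = 0 then 0 < w 1 else w (i.val : ℤ) < w ((i.val : ℤ) + 1)

lemma jval_bound (i : Fin n) : ((i.val : ℤ)) + 1 ≤ (n : ℤ) := by
  have := i.isLt
  omega

lemma len_asc (hn : 1 ≤ n) (i : Fin n) (hw : SP n w) (h : ascI n i w) :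
    len n (w * genB n i) = len n w + 1 := by
  rcases eq_or_ne i.val 0 with h0 | h0
  · rw [genB_eq_s0 h0]
    rw [ascI, if_pos h0] at h
    exact (len_mul_s0 hn hw).1 h
  · rw [genB_eq_gp h0]
    rw [ascI, if_neg h0] at h
    have hj : 1 ≤ (i.val : ℤ) := by
      have := Nat.one_le_iff_ne_zero.mpr h0
      omega
    exact (len_mul_gp hj (jval_bound i) hw).1 h

lemma len_desc (hn : 1 ≤ n) (i : Fin n) (hw : SP n w) (h : ¬ascI n i w) :
    len n (w * genB n i) + 1 = len n w := by
  rcases eq_or_ne i.val 0 with h0 | h0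
  · rw [genB_eq_s0 h0]
    rw [ascI, if_pos h0] at h
    have h1 : w 1 ≠ 0 := by
      intro hx
      have h2 : w 1 = w 0 := by rw [hx, hw.zero]
      have := w.injective h2
      omega
    exact (len_mul_s0 hn hw).2 (by omega)
  · rw [genB_eq_gp h0]
    rw [ascI, if_neg h0] at h
    have hj : 1 ≤ (i.val : ℤ) := by
      have := Nat.one_le_iff_ne_zero.mpr h0
      omega
    have hne : w (i.val : ℤ) ≠ w ((i.val : ℤ) + 1) := by
      intro hx
      have := w.injective hx
      omega
    exact (len_mul_gp hj (jval_bound i) hw).2 (by omega)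

/-- product of a word -/
def prodF (n : ℕ) (l : List (Fin n)) : Equiv.Perm ℤ := (l.map (genB n)).prod

lemma prodF_nil : prodF n [] = 1 := rfl

lemma prodF_append (p q : List (Fin n)) : prodF n (p ++ q) = prodF n p * prodF n q := by
  rw [prodF, prodF, prodF, List.map_append, List.prod_append]

lemma prodF_cons (i : Fin n) (l : List (Fin n)) :
    prodF n (i :: l) = genB n i * prodF n l := by
  rw [prodF, prodF, List.map_cons, List.prod_cons]

lemma prodF_singleton (i : Fin n) : prodF n [i] = genB n i := by
  rw [prodF]; simp

lemma SP_prodF (hn : 1 ≤ n) (l : List (Fin n)) : SP n (prodF n l) := by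
  induction l with
  | nil => exact SP.one
  | cons i l ih => exact (prodF_cons i l) ▸ SP.mul (SP.genB hn i) ih

lemma len_mul_le (hn : 1 ≤ n) (q : List (Fin n)) :
    ∀ w : Equiv.Perm ℤ, SP n w → len n (w * prodF n q) ≤ len n w + q.length := by
  induction q with
  | nil => intro w hw; rw [prodF_nil, mul_one]; simp
  | cons i q ih =>
    intro w hw
    rw [prodF_cons, ← mul_assoc]
    have h1 := ih (w * genB n i) (SP.mul hw (SP.genB hn i))
    have h2 : len n (w * genB n i) ≤ len n w + 1 := by
      by_cases h : ascI n i w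
      · rw [len_asc hn i hw h]
      · have := len_desc hn i hw h
        omega
    simp only [List.length_cons]
    omega

lemma len_prod_le (hn : 1 ≤ n) (l : List (Fin n)) : len n (prodF n l) ≤ l.length := by
  have := len_mul_le hn l 1 SP.one
  rw [one_mul, len_one] at this
  omega

end SPB2

namespace SPB2
open Equiv Finset SPB

variable {n : ℕ} {w : Equiv.Perm ℤ}

lemma no_descent_id (hn : 1 ≤ n) (hw : SP n w) (hasc : ∀ i : Fin n, ascI n i w) :
    w = 1 := by
  have h1 : 0 < w 1 := by
    have := hasc ⟨0, by omega⟩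
    rwa [ascI, if_pos rfl] at this
  have inc : ∀ k : ℕ, 1 ≤ k → k + 1 ≤ n → w (k : ℤ) < w ((k : ℤ) + 1) := by
    intro k hk hkn
    have H := hasc ⟨k, by omega⟩
    rw [ascI] at H
    have hv : ((⟨k, by omega⟩ : Fin n) : ℕ) = k := rfl
    rw [hv, if_neg (by omega)] at H
    exact H
  have low : ∀ k : ℕ, 1 ≤ k → k ≤ n → (k : ℤ) ≤ w (k : ℤ) := by
    intro k
    induction k with
    | zero => omega
    | succ m ih =>
      intro _ hmn
      by_cases h : m = 0
      · subst h
        norm_num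
        omega
      · have hm1 : 1 ≤ m := by omega
        have h2 := ih hm1 (by omega)
        have h3 := inc m hm1 (by omega)
        push_cast at h3 ⊢
        omega
  have up : ∀ d : ℕ, ∀ k : ℕ, 1 ≤ k → k ≤ n → n - k ≤ d → w (k : ℤ) ≤ (k : ℤ) := by
    intro d
    induction d with
    | zero =>
      intro k hk hkn hd
      have hkn' : k = n := by omega
      have := hw.abs_le (a := (k : ℤ)) (by rw [abs_of_nonneg (by positivity)]; omega)
      have := le_abs_self (w (k : ℤ))
      omega
    | succ d ih =>
      intro k hk hkn hd
      by_cases hkn' : k = n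
      · have := hw.abs_le (a := (k : ℤ)) (by rw [abs_of_nonneg (by positivity)]; omega)
        have := le_abs_self (w (k : ℤ))
        omega
      · have h2 := ih (k + 1) (by omega) (by omega) (by omega)
        have h3 := inc k hk (by omega)
        push_cast at h2
        omega
  have fixpos : ∀ k : ℕ, 1 ≤ k → k ≤ n → w (k : ℤ) = (k : ℤ) := by
    intro k hk hkn
    have := low k hk hkn
    have := up (n - k) k hk hkn (le_refl _)
    omega
  ext a
  rw [Equiv.Perm.one_apply]
  rcases lt_trichotomy a 0 with ha | ha | ha
  · by_cases han : (n : ℤ) < |a|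
    · exact hw.2 a han
    · have hb : w (-a) = -a := by
        have h1 : 1 ≤ (-a).toNat := by omega
        have h2 : (-a).toNat ≤ n := by
          rw [abs_of_neg ha] at han
          omega
        have := fixpos (-a).toNat h1 h2
        rwa [Int.toNat_of_nonneg (by omega)] at this
      have := hw.1 (-a)
      rw [neg_neg] at this
      rw [hb] at this
      omega
  · rw [ha]
    exact hw.zero
  · by_cases han : (n : ℤ) < |a|
    · exact hw.2 a han
    · have h1 : 1 ≤ a.toNat := by omega
      have h2 : a.toNat ≤ n := by
        rw [abs_of_pos ha] at han
        omega
      have := fixpos a.toNat h1 h2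
      rwa [Int.toNat_of_nonneg (by omega)] at this

lemma exists_word (hn : 1 ≤ n) :
    ∀ N : ℕ, ∀ w : Equiv.Perm ℤ, SP n w → len n w = N →
    ∃ l : List (Fin n), prodF n l = w ∧ l.length = len n w := by
  intro N
  induction N using Nat.strong_induction_on with
  | _ N ih =>
    intro w hw hlen
    by_cases hasc : ∀ i : Fin n, ascI n i w
    · refine ⟨[], ?_, ?_⟩
      · rw [prodF_nil, no_descent_id hn hw hasc]
      · rw [no_descent_id hn hw hasc, len_one]
        rfl
    · push_neg at hasc
      obtain ⟨i, hi⟩ := hasc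
      have hstep := len_desc hn i hw hi
      have hSP : SP n (w * genB n i) := SP.mul hw (SP.genB hn i)
      obtain ⟨l', hl'1, hl'2⟩ := ih (len n (w * genB n i)) (by omega) (w * genB n i) hSP rfl
      refine ⟨l' ++ [i], ?_, ?_⟩
      · rw [prodF_append, hl'1, prodF_singleton, mul_assoc, genB_invol, mul_one]
      · rw [List.length_append, hl'2]
        simp only [List.length_singleton]
        omega

lemma min_word_len (hn : 1 ≤ n) {l : List (Fin n)} (hprod : prodF n l = w)
    (hmin : ∀ l' : List (Fin n), prodF n l' = w → l.length ≤ l'.length) :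
    l.length = len n w := by
  have h1 : len n w ≤ l.length := by
    rw [← hprod]
    exact len_prod_le hn l
  obtain ⟨l', hl'1, hl'2⟩ := exists_word hn (len n w) w (hprod ▸ SP_prodF hn l) rfl
  have := hmin l' hl'1
  omega

end SPB2

namespace SPB2
open Equiv Finset SPB

variable {n : ℕ} {w : Equiv.Perm ℤ} {j : ℤ}

/-- the pattern: a decreasing pair of negative values -/
def Pat (n : ℕ) (w : Equiv.Perm ℤ) : Prop :=
  ∃ p q : ℤ, 1 ≤ p ∧ p < q ∧ q ≤ (n : ℤ) ∧ w q < w p ∧ w p < 0 ∧ w q < 0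

lemma gp_pos_lt (hj : 1 ≤ j) (hjn : j + 1 ≤ (n : ℤ)) {p q : ℤ}
    (h1 : 1 ≤ p) (h2 : p < q) (h3 : q ≤ (n : ℤ)) (hne : ¬(p = j ∧ q = j + 1)) :
    1 ≤ gp j p ∧ gp j p < gp j q ∧ gp j q ≤ (n : ℤ) := by
  simp only [gp_apply hj]
  split_ifs <;> omega

lemma pat_transfer (i : Fin n) {p q : ℤ}
    (h1 : 1 ≤ p) (h2 : p < q) (h3 : q ≤ (n : ℤ))
    (h4 : w q < w p) (h5 : w p < 0) (h6 : w q < 0)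
    (hex0 : i.val = 0 → p ≠ 1)
    (hex1 : ¬(p = (i.val : ℤ) ∧ q = (i.val : ℤ) + 1)) :
    Pat n (w * genB n i) := by
  rcases eq_or_ne i.val 0 with h0 | h0
  · rw [genB_eq_s0 h0]
    have hp2 : 2 ≤ p := by
      have := hex0 h0
      omega
    have hsp : s0 p = p := by rw [s0_apply, if_neg (by omega), if_neg (by omega)]
    have hsq : s0 q = q := by rw [s0_apply, if_neg (by omega), if_neg (by omega)]
    exact ⟨p, q, h1, h2, h3, by
      simp only [Equiv.Perm.mul_apply, hsp, hsq]
      exact ⟨h4, h5, h6⟩⟩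
  · rw [genB_eq_gp h0]
    have hj : 1 ≤ ((i.val : ℕ) : ℤ) := by
      have := Nat.one_le_iff_ne_zero.mpr h0
      omega
    obtain ⟨a1, a2, a3⟩ := gp_pos_lt hj (jval_bound i) h1 h2 h3 hex1
    refine ⟨gp (i.val : ℤ) p, gp (i.val : ℤ) q, a1, a2, a3, ?_⟩
    simp only [Equiv.Perm.mul_apply, gp_gp hj]
    exact ⟨h4, h5, h6⟩

lemma pat_asc (i : Fin n) (hw : SP n w) (hp : Pat n w) (ha : ascI n i w) :
    Pat n (w * genB n i) := by
  obtain ⟨p, q, h1, h2, h3, h4, h5, h6⟩ := hp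
  rcases eq_or_ne i.val 0 with h0 | h0
  · rw [ascI, if_pos h0] at ha
    refine pat_transfer i h1 h2 h3 h4 h5 h6 (fun _ hp1 => ?_) ?_
    · rw [hp1] at h5
      omega
    · rw [h0]
      push_cast
      omega
  · rw [ascI, if_neg h0] at ha
    refine pat_transfer i h1 h2 h3 h4 h5 h6 (fun hc => absurd hc h0) ?_
    rintro ⟨hp1, hq1⟩
    rw [hp1, hq1] at h4
    omega

lemma all_prefix_asc (hn : 1 ≤ n) {l : List (Fin n)} (hlen : l.length = len n (prodF n l)) :
    ∀ (p : List (Fin n)) (i : Fin n) (q : List (Fin n)), l = p ++ i :: q →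
      ascI n i (prodF n p) := by
  intro p i q hdec
  by_contra hna
  have hz : SP n (prodF n p) := SP_prodF hn p
  have hd := len_desc hn i hz hna
  have hp : len n (prodF n p) ≤ p.length := len_prod_le hn p
  have hsplit : prodF n l = (prodF n p * genB n i) * prodF n q := by
    rw [hdec, show p ++ i :: q = (p ++ [i]) ++ q by simp, prodF_append, prodF_append,
      prodF_singleton]
  have hq := len_mul_le hn q (prodF n p * genB n i) (SP.mul hz (SP.genB hn i))
  rw [← hsplit] at hq
  have hlength : l.length = p.length + 1 + q.length := by
    rw [hdec]
    simp only [List.length_append, List.length_cons]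
    omega
  omega

lemma pat_extend (hn : 1 ≤ n) {l : List (Fin n)} (hlen : l.length = len n (prodF n l)) :
    ∀ (q p : List (Fin n)), l = p ++ q → Pat n (prodF n p) → Pat n (prodF n l) := by
  intro q
  induction q with
  | nil =>
    intro p hdec hp
    rw [hdec, List.append_nil]
    exact hp
  | cons i q ih =>
    intro p hdec hp
    have ha := all_prefix_asc hn hlen p i q hdec
    have hp' : Pat n (prodF n (p ++ [i])) := by
      rw [prodF_append, prodF_singleton]
      exact pat_asc i (SP_prodF hn p) hp ha
    exact ih (p ++ [i]) (by rw [hdec]; simp) hp'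

end SPB2

namespace SPB2
open Equiv Finset SPB

variable {n : ℕ} {w : Equiv.Perm ℤ}

lemma ev_s0_1 : s0 (1 : ℤ) = -1 := by rw [s0_apply]; norm_num
lemma ev_s0_2 : s0 (2 : ℤ) = 2 := by rw [s0_apply]; norm_num
lemma ev_s0_n1 : s0 (-1 : ℤ) = 1 := by rw [s0_apply]; norm_num
lemma ev_s0_n2 : s0 (-2 : ℤ) = -2 := by rw [s0_apply]; norm_num
lemma ev_s1_1 : gp 1 (1 : ℤ) = 2 := by rw [gp_apply le_rfl]; norm_num
lemma ev_s1_2 : gp 1 (2 : ℤ) = 1 := by rw [gp_apply le_rfl]; norm_num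
lemma ev_s1_n1 : gp 1 (-1 : ℤ) = -2 := by rw [gp_apply le_rfl]; norm_num
lemma ev_s1_n2 : gp 1 (-2 : ℤ) = -1 := by rw [gp_apply le_rfl]; norm_num

lemma dir1 (hn : 2 ≤ n) {l : List (Fin n)} (hlen : l.length = len n (prodF n l))
    (hsub : [0,1,0,1] <:+: l.map Fin.val ∨ [1,0,1,0] <:+: l.map Fin.val) :
    Pat n (prodF n l) := by
  have hn1 : 1 ≤ n := by omega
  have hn2 : (2 : ℤ) ≤ (n : ℤ) := by exact_mod_cast hn
  obtain hcase | hcase := hsub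
  · obtain ⟨s, t, hst⟩ := hcase
    have hmap : l.map Fin.val = s ++ ([0,1,0,1] ++ t) := by
      rw [← hst]; simp [List.append_assoc]
    rw [List.map_eq_append_iff] at hmap
    obtain ⟨l1, l23, hl, hmap1, hmap23⟩ := hmap
    rw [List.map_eq_append_iff] at hmap23
    obtain ⟨m, l2, hl23, hmapm, hmap2⟩ := hmap23
    rw [List.map_eq_cons_iff] at hmapm
    obtain ⟨a, m1, rfl, ha, hmapm⟩ := hmapm
    rw [List.map_eq_cons_iff] at hmapm
    obtain ⟨b, m2, rfl, hb, hmapm⟩ := hmapm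
    rw [List.map_eq_cons_iff] at hmapm
    obtain ⟨c, m3, rfl, hc, hmapm⟩ := hmapm
    rw [List.map_eq_cons_iff] at hmapm
    obtain ⟨d, m4, rfl, hd, hmapm⟩ := hmapm
    rw [List.map_eq_nil_iff] at hmapm
    subst hmapm
    subst hl23
    have hga : genB n a = s0 := genB_eq_s0 ha
    have hgb : genB n b = gp 1 := by
      rw [genB_eq_gp (by omega : b.val ≠ 0), hb]; norm_num
    have hgc : genB n c = s0 := genB_eq_s0 hc
    have hgd : genB n d = gp 1 := by
      rw [genB_eq_gp (by omega : d.val ≠ 0), hd]; norm_num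
    have hz : SP n (prodF n l1) := SP_prodF hn1 l1
    have asc_a := all_prefix_asc hn1 hlen l1 a (b :: c :: d :: l2) (by rw [hl]; rfl)
    have asc_d := all_prefix_asc hn1 hlen (l1 ++ [a, b, c]) d l2 (by rw [hl]; simp)
    rw [ascI, if_pos ha] at asc_a
    rw [ascI, if_neg (by omega : d.val ≠ 0), hd, Nat.cast_one,
      show (1:ℤ) + 1 = 2 by norm_num] at asc_d
    have hy : prodF n (l1 ++ [a, b, c]) = prodF n l1 * (s0 * (gp 1 * s0)) := by
      rw [prodF_append]
      congr 1
      simp [prodF, hga, hgb, hgc, mul_assoc]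
    rw [hy] at asc_d
    have hy1 : (prodF n l1 * (s0 * (gp 1 * s0))) 1 = -(prodF n l1 2) := by
      simp only [Equiv.Perm.mul_apply]
      rw [ev_s0_1, ev_s1_n1, ev_s0_n2, hz.1]
    have hy2 : (prodF n l1 * (s0 * (gp 1 * s0))) 2 = -(prodF n l1 1) := by
      simp only [Equiv.Perm.mul_apply]
      rw [ev_s0_2, ev_s1_2, ev_s0_1, hz.1]
    rw [hy1, hy2] at asc_d
    -- now: 0 < z 1 (asc_a), and -(prodF n l1 2) < -(prodF n l1 1), so z 1 < z 2
    have hu : prodF n (l1 ++ [a, b, c, d]) = prodF n l1 * (s0 * (gp 1 * (s0 * gp 1))) := by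
      rw [prodF_append]
      congr 1
      simp [prodF, hga, hgb, hgc, hgd, mul_assoc]
    have hu1 : prodF n (l1 ++ [a, b, c, d]) 1 = -(prodF n l1 1) := by
      rw [hu]
      simp only [Equiv.Perm.mul_apply]
      rw [ev_s1_1, ev_s0_2, ev_s1_2, ev_s0_1, hz.1]
    have hu2 : prodF n (l1 ++ [a, b, c, d]) 2 = -(prodF n l1 2) := by
      rw [hu]
      simp only [Equiv.Perm.mul_apply]
      rw [ev_s1_2, ev_s0_1, ev_s1_n1, ev_s0_n2, hz.1]
    have hpatU : Pat n (prodF n (l1 ++ [a, b, c, d])) := by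
      exact ⟨1, 2, by norm_num, by norm_num, hn2, by rw [hu1, hu2]; omega,
        by rw [hu1]; omega, by rw [hu2]; omega⟩
    exact pat_extend hn1 hlen l2 (l1 ++ [a, b, c, d]) (by rw [hl]; simp) hpatU
  · obtain ⟨s, t, hst⟩ := hcase
    have hmap : l.map Fin.val = s ++ ([1,0,1,0] ++ t) := by
      rw [← hst]; simp [List.append_assoc]
    rw [List.map_eq_append_iff] at hmap
    obtain ⟨l1, l23, hl, hmap1, hmap23⟩ := hmap
    rw [List.map_eq_append_iff] at hmap23
    obtain ⟨m, l2, hl23, hmapm, hmap2⟩ := hmap23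
    rw [List.map_eq_cons_iff] at hmapm
    obtain ⟨a, m1, rfl, ha, hmapm⟩ := hmapm
    rw [List.map_eq_cons_iff] at hmapm
    obtain ⟨b, m2, rfl, hb, hmapm⟩ := hmapm
    rw [List.map_eq_cons_iff] at hmapm
    obtain ⟨c, m3, rfl, hc, hmapm⟩ := hmapm
    rw [List.map_eq_cons_iff] at hmapm
    obtain ⟨d, m4, rfl, hd, hmapm⟩ := hmapm
    rw [List.map_eq_nil_iff] at hmapm
    subst hmapm
    subst hl23
    have hga : genB n a = gp 1 := by
      rw [genB_eq_gp (by omega : a.val ≠ 0), ha]; norm_num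
    have hgb : genB n b = s0 := genB_eq_s0 hb
    have hgc : genB n c = gp 1 := by
      rw [genB_eq_gp (by omega : c.val ≠ 0), hc]; norm_num
    have hgd : genB n d = s0 := genB_eq_s0 hd
    have hz : SP n (prodF n l1) := SP_prodF hn1 l1
    have asc_a := all_prefix_asc hn1 hlen l1 a (b :: c :: d :: l2) (by rw [hl]; rfl)
    have asc_d := all_prefix_asc hn1 hlen (l1 ++ [a, b, c]) d l2 (by rw [hl]; simp)
    rw [ascI, if_neg (by omega : a.val ≠ 0), ha, Nat.cast_one,
      show (1:ℤ) + 1 = 2 by norm_num] at asc_a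
    rw [ascI, if_pos hd] at asc_d
    have hy : prodF n (l1 ++ [a, b, c]) = prodF n l1 * (gp 1 * (s0 * gp 1)) := by
      rw [prodF_append]
      congr 1
      simp [prodF, hga, hgb, hgc, mul_assoc]
    rw [hy] at asc_d
    have hy1 : (prodF n l1 * (gp 1 * (s0 * gp 1))) 1 = prodF n l1 1 := by
      simp only [Equiv.Perm.mul_apply]
      rw [ev_s1_1, ev_s0_2, ev_s1_2]
    rw [hy1] at asc_d
    have hu : prodF n (l1 ++ [a, b, c, d]) = prodF n l1 * (gp 1 * (s0 * (gp 1 * s0))) := by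
      rw [prodF_append]
      congr 1
      simp [prodF, hga, hgb, hgc, hgd, mul_assoc]
    have hu1 : prodF n (l1 ++ [a, b, c, d]) 1 = -(prodF n l1 1) := by
      rw [hu]
      simp only [Equiv.Perm.mul_apply]
      rw [ev_s0_1, ev_s1_n1, ev_s0_n2, ev_s1_n2, hz.1]
    have hu2 : prodF n (l1 ++ [a, b, c, d]) 2 = -(prodF n l1 2) := by
      rw [hu]
      simp only [Equiv.Perm.mul_apply]
      rw [ev_s0_2, ev_s1_2, ev_s0_1, ev_s1_n1, hz.1]
    have hpatU : Pat n (prodF n (l1 ++ [a, b, c, d])) := by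
      exact ⟨1, 2, by norm_num, by norm_num, hn2, by rw [hu1, hu2]; omega,
        by rw [hu1]; omega, by rw [hu2]; omega⟩
    exact pat_extend hn1 hlen l2 (l1 ++ [a, b, c, d]) (by rw [hl]; simp) hpatU

end SPB2

namespace SPB2
open Equiv Finset SPB

variable {n : ℕ} {w : Equiv.Perm ℤ}

lemma SP.apply_ne (hw : SP n w) {x : ℤ} (hx : x ≠ 0) : w x ≠ 0 := by
  intro h
  exact hx (w.injective (h.trans hw.zero.symm))

lemma mul_can (a g x : Equiv.Perm ℤ) (h : g * g = 1) : a * g * (g * x) = a * x := by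
  rw [mul_assoc, ← mul_assoc g, h, one_mul]

lemma infix_app {α : Type*} {x y : List α} (z : List α) (h : x <:+: y) : x <:+: y ++ z := by
  obtain ⟨s, t, hst⟩ := h
  exact ⟨s, t ++ z, by rw [← hst]; simp⟩

lemma exists_desc_btwn (w : Equiv.Perm ℤ) :
    ∀ k : ℕ, ∀ p : ℤ, w (p + k) < w p → ∃ x : ℤ, p ≤ x ∧ x < p + k ∧ w (x + 1) < w x := by
  intro k
  induction k with
  | zero =>
    intro p h
    norm_num at h
  | succ k ihk =>
    intro p h
    by_cases hc : w (p + k) < w p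
    · obtain ⟨x, hx1, hx2, hx3⟩ := ihk p hc
      exact ⟨x, hx1, by push_cast; omega, hx3⟩
    · push_neg at hc
      refine ⟨p + k, by omega, by push_cast; omega, ?_⟩
      have he : p + ((k : ℤ) + 1) = p + k + 1 := by ring
      push_cast at h
      rw [he] at h
      omega

lemma ascI_iff_val {i : Fin n} (h : i.val ≠ 0) :
    ascI n i w ↔ w (i.val : ℤ) < w ((i.val : ℤ) + 1) := by
  rw [ascI, if_neg h]

lemma ascI_iff_zero {i : Fin n} (h : i.val = 0) : ascI n i w ↔ 0 < w 1 := by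
  rw [ascI, if_pos h]

lemma dir2 (hn : 2 ≤ n) : ∀ N : ℕ, ∀ w : Equiv.Perm ℤ, SP n w → len n w = N → Pat n w →
    ∃ l : List (Fin n), prodF n l = w ∧ l.length = len n w ∧
      ([0,1,0,1] <:+: l.map Fin.val ∨ [1,0,1,0] <:+: l.map Fin.val) := by
  have hn1 : 1 ≤ n := by omega
  intro N
  induction N using Nat.strong_induction_on with
  | _ N ih =>
    intro w hw hlen hpat
    have hi0lt : 0 < n := by omega
    have hi1lt : 1 < n := by omega
    have hg0 : genB n (⟨0, hi0lt⟩ : Fin n) = s0 := genB_eq_s0 rfl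
    have hg1 : genB n (⟨1, hi1lt⟩ : Fin n) = gp 1 := by
      rw [genB_eq_gp (by norm_num : ((⟨1, hi1lt⟩ : Fin n)).val ≠ 0)]
      norm_num
    by_cases hA : w 1 < 0 ∧ w 2 < w 1
    · obtain ⟨hA1, hA2⟩ := hA
      have hw2neg : w 2 < 0 := by omega
      -- the four descent steps
      have d1 : ¬ ascI n (⟨1, hi1lt⟩ : Fin n) w := by
        rw [ascI_iff_val (by norm_num)]
        norm_num
        omega
      have L1 := len_desc hn1 _ hw d1
      have hW1 : SP n (w * genB n (⟨1, hi1lt⟩ : Fin n)) := SP.mul hw (SP.genB hn1 _)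
      have hval1_1 : genB n (⟨1, hi1lt⟩ : Fin n) 1 = 2 := by rw [hg1]; exact ev_s1_1
      have hval1_2 : genB n (⟨1, hi1lt⟩ : Fin n) 2 = 1 := by rw [hg1]; exact ev_s1_2
      have hval0_1 : genB n (⟨0, hi0lt⟩ : Fin n) 1 = -1 := by rw [hg0]; exact ev_s0_1
      have hval0_2 : genB n (⟨0, hi0lt⟩ : Fin n) 2 = 2 := by rw [hg0]; exact ev_s0_2
      have e11 : (w * genB n (⟨1, hi1lt⟩ : Fin n)) 1 = w 2 := by
        rw [Equiv.Perm.mul_apply, hval1_1]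
      have e12 : (w * genB n (⟨1, hi1lt⟩ : Fin n)) 2 = w 1 := by
        rw [Equiv.Perm.mul_apply, hval1_2]
      have d2 : ¬ ascI n (⟨0, hi0lt⟩ : Fin n) (w * genB n (⟨1, hi1lt⟩ : Fin n)) := by
        rw [ascI_iff_zero rfl, e11]
        omega
      have L2 := len_desc hn1 _ hW1 d2
      have hW2 : SP n (w * genB n (⟨1, hi1lt⟩ : Fin n) * genB n (⟨0, hi0lt⟩ : Fin n)) :=
        SP.mul hW1 (SP.genB hn1 _)
      have e21 : (w * genB n (⟨1, hi1lt⟩ : Fin n) * genB n (⟨0, hi0lt⟩ : Fin n)) 1 = -(w 2) := by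
        rw [Equiv.Perm.mul_apply, hval0_1, hW1.1 1, e11]
      have e22 : (w * genB n (⟨1, hi1lt⟩ : Fin n) * genB n (⟨0, hi0lt⟩ : Fin n)) 2 = w 1 := by
        rw [Equiv.Perm.mul_apply, hval0_2, e12]
      have d3 : ¬ ascI n (⟨1, hi1lt⟩ : Fin n)
          (w * genB n (⟨1, hi1lt⟩ : Fin n) * genB n (⟨0, hi0lt⟩ : Fin n)) := by
        rw [ascI_iff_val (by norm_num)]
        simp only [Fin.val_mk, Nat.cast_one]
        rw [show (1:ℤ) + 1 = 2 by norm_num, e21, e22]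
        omega
      have L3 := len_desc hn1 _ hW2 d3
      have hW3 : SP n (w * genB n (⟨1, hi1lt⟩ : Fin n) * genB n (⟨0, hi0lt⟩ : Fin n) *
          genB n (⟨1, hi1lt⟩ : Fin n)) := SP.mul hW2 (SP.genB hn1 _)
      have e31 : (w * genB n (⟨1, hi1lt⟩ : Fin n) * genB n (⟨0, hi0lt⟩ : Fin n) *
          genB n (⟨1, hi1lt⟩ : Fin n)) 1 = w 1 := by
        rw [Equiv.Perm.mul_apply, hval1_1, e22]
      have d4 : ¬ ascI n (⟨0, hi0lt⟩ : Fin n)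
          (w * genB n (⟨1, hi1lt⟩ : Fin n) * genB n (⟨0, hi0lt⟩ : Fin n) *
            genB n (⟨1, hi1lt⟩ : Fin n)) := by
        rw [ascI_iff_zero rfl, e31]
        omega
      have L4 := len_desc hn1 _ hW3 d4
      have hV : SP n (w * genB n (⟨1, hi1lt⟩ : Fin n) * genB n (⟨0, hi0lt⟩ : Fin n) *
          genB n (⟨1, hi1lt⟩ : Fin n) * genB n (⟨0, hi0lt⟩ : Fin n)) := SP.mul hW3 (SP.genB hn1 _)
      obtain ⟨lv, hlv1, hlv2⟩ := exists_word hn1 _ _ hV rfl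
      refine ⟨lv ++ [⟨0, hi0lt⟩, ⟨1, hi1lt⟩, ⟨0, hi0lt⟩, ⟨1, hi1lt⟩], ?_, ?_, ?_⟩
      · rw [prodF_append, hlv1]
        have e : prodF n [(⟨0, hi0lt⟩ : Fin n), ⟨1, hi1lt⟩, ⟨0, hi0lt⟩, ⟨1, hi1lt⟩] =
            genB n (⟨0, hi0lt⟩ : Fin n) * (genB n (⟨1, hi1lt⟩ : Fin n) *
              (genB n (⟨0, hi0lt⟩ : Fin n) * genB n (⟨1, hi1lt⟩ : Fin n))) := by
          simp [prodF, mul_assoc]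
        rw [e, mul_can _ _ _ (genB_invol _), mul_can _ _ _ (genB_invol _),
          mul_can _ _ _ (genB_invol _), mul_assoc, genB_invol, mul_one]
      · rw [List.length_append, hlv2]
        simp only [List.length_cons, List.length_nil]
        omega
      · left
        rw [List.map_append]
        refine ⟨List.map Fin.val lv, [], ?_⟩
        simp
    · obtain ⟨p, q, h1, h2, h3, h4, h5, h6⟩ := hpat
      have key : ∃ i : Fin n, ¬ ascI n i w ∧ (i.val = 0 → p ≠ 1) ∧
          ¬(p = (i.val : ℤ) ∧ q = (i.val : ℤ) + 1) := by
        by_cases hq : q = p + 1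
        · have hp2 : 2 ≤ p := by
            rcases eq_or_lt_of_le h1 with hp1 | hp1
            · exfalso
              rw [← hp1] at h4 h5
              rw [hq, ← hp1] at h4
              norm_num at h4
              exact hA ⟨h5, h4⟩
            · omega
          by_cases hw1 : w 1 < 0
          · refine ⟨⟨0, hi0lt⟩, ?_, fun _ => by omega, ?_⟩
            · rw [ascI_iff_zero rfl]
              omega
            · norm_num
              intro hp0
              omega
          · -- all small values would be positive; find a descent j ≠ p
            have hj : ∃ j : ℕ, 1 ≤ j ∧ j + 1 ≤ n ∧ (j : ℤ) ≠ p ∧ w ((j : ℤ) + 1) < w (j : ℤ) := by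
              by_contra hno
              push_neg at hno
              have hchain : ∀ k : ℕ, 1 ≤ k → (k : ℤ) ≤ p → 0 < w (k : ℤ) := by
                intro k
                induction k with
                | zero => omega
                | succ m ihm =>
                  intro _ hmp
                  by_cases hm0 : m = 0
                  · subst hm0
                    have := hw.apply_ne (one_ne_zero (α := ℤ))
                    norm_num
                    omega
                  · have hm1 : 1 ≤ m := by omega
                    have hmp' : (m : ℤ) ≤ p := by push_cast at hmp ⊢; omega
                    have hpos := ihm hm1 hmp'
                    have hmn : m + 1 ≤ n := by
                      have : (m : ℤ) + 1 ≤ (n : ℤ) := by push_cast at hmp; omega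
                      exact_mod_cast this
                    have hne : (m : ℤ) ≠ p := by push_cast at hmp; omega
                    have hle := hno m hm1 hmn hne
                    have hne2 : w ((m : ℤ) + 1) ≠ w (m : ℤ) := by
                      intro hx
                      have := w.injective hx
                      omega
                    push_cast
                    omega
              have hfin : 0 < w p := by
                have h1' : 1 ≤ p.toNat := by omega
                have h2' : (p.toNat : ℤ) ≤ p := by omega
                have := hchain p.toNat h1' h2'
                rwa [Int.toNat_of_nonneg (by omega)] at this
              omega
            obtain ⟨j, hj1, hj2, hj3, hj4⟩ := hj
            refine ⟨⟨j, by omega⟩, ?_, fun hc => by simp at hc; omega, ?_⟩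
            · rw [ascI_iff_val (by simp; omega)]
              simp only [Fin.val_mk]
              omega
            · simp only [Fin.val_mk]
              intro hc
              exact hj3 hc.1.symm
        · -- q ≥ p + 2 : find a descent inside [p, q)
          have hk : w (p + ((q - p).toNat : ℤ)) < w p := by
            rw [Int.toNat_of_nonneg (by omega), show p + (q - p) = q by ring]
            exact h4
          obtain ⟨x, hx1, hx2, hx3⟩ := exists_desc_btwn w (q - p).toNat p hk
          rw [Int.toNat_of_nonneg (by omega), show p + (q - p) = q by ring] at hx2
          refine ⟨⟨x.toNat, by omega⟩, ?_, fun hc => by simp at hc; omega, ?_⟩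
          · rw [ascI_iff_val (by simp; omega)]
            simp only [Fin.val_mk]
            rw [Int.toNat_of_nonneg (by omega)]
            omega
          · simp only [Fin.val_mk]
            rw [Int.toNat_of_nonneg (by omega)]
            intro hc
            omega
      obtain ⟨i, hdesc, hex0, hex1⟩ := key
      have hstep := len_desc hn1 i hw hdesc
      have hp' : Pat n (w * genB n i) := pat_transfer i h1 h2 h3 h4 h5 h6 hex0 hex1
      have hSP' : SP n (w * genB n i) := SP.mul hw (SP.genB hn1 i)
      obtain ⟨l', hl1, hl2, hl3⟩ := ih (len n (w * genB n i)) (by omega) _ hSP' rfl hp'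
      refine ⟨l' ++ [i], ?_, ?_, ?_⟩
      · rw [prodF_append, hl1, prodF_singleton, mul_assoc, genB_invol, mul_one]
      · rw [List.length_append, hl2]
        simp only [List.length_cons, List.length_nil]
        omega
      · rw [List.map_append]
        rcases hl3 with h | h
        · exact Or.inl (infix_app _ h)
        · exact Or.inr (infix_app _ h)

end SPB2


open SPB SPB2

/-- Let `w` be a signed permutation of `{±1, …, ±n}` (a permutation of `ℤ` with
`w(-a) = -w(a)`, fixing everything of absolute value `> n`). Then no reduced expression
for `w` in the generators `s_0, s_1, …, s_{n-1}` of type `B_n` contains the substring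
`s_0 s_1 s_0 s_1` or `s_1 s_0 s_1 s_0`, if and only if there is no pair of indices
`1 ≤ i < j ≤ n` with `w(i) > w(j)` and both `w(i) < 0` and `w(j) < 0`. -/
theorem stmt_0 (n : ℕ) (hn : 2 ≤ n) (w : Equiv.Perm ℤ)
    (hsgn : ∀ a : ℤ, w (-a) = -w a)
    (hfix : ∀ a : ℤ, (n : ℤ) < |a| → w a = a)
    (hgen : ∃ l : List (Fin n), (l.map (genB n)).prod = w) :
    (∀ l : List (Fin n), (l.map (genB n)).prod = w →
      (∀ l' : List (Fin n), (l'.map (genB n)).prod = w → l.length ≤ l'.length) →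
      ¬ ([0, 1, 0, 1] <:+: l.map Fin.val ∨ [1, 0, 1, 0] <:+: l.map Fin.val))
    ↔ ¬ ∃ i j : ℤ, 1 ≤ i ∧ i < j ∧ j ≤ (n : ℤ) ∧ w j < w i ∧ w i < 0 ∧ w j < 0 := by
  have hn1 : 1 ≤ n := by omega
  have hw : SP n w := ⟨hsgn, hfix⟩
  constructor
  · intro LHS hex
    obtain ⟨l, hl1, hl2, hl3⟩ := dir2 hn (len n w) w hw rfl hex
    have hl1' : (l.map (genB n)).prod = w := hl1
    have hminl : ∀ l' : List (Fin n), (l'.map (genB n)).prod = w → l.length ≤ l'.length := by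
      intro l' hl'
      have hle : len n (prodF n l') ≤ l'.length := len_prod_le hn1 l'
      have : prodF n l' = w := hl'
      rw [this] at hle
      omega
    exact LHS l hl1' hminl hl3
  · intro hnp l hl hmin hsub
    have hl' : prodF n l = w := hl
    have hmin' : ∀ l' : List (Fin n), prodF n l' = w → l.length ≤ l'.length := fun l' h => hmin l' h
    have hlen : l.length = len n w := min_word_len hn1 hl' hmin'
    have hlen' : l.length = len n (prodF n l) := by rw [hl']; exact hlen
    have hpat := dir1 hn hlen' hsub
    rw [hl'] at hpat
    exact hnp hpat
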